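/- Let Γ† = (Q†,f†,g†) be the exact coefficient with state Φ† = U_{Γ†}, and let z_δ ∈ L²(Ω) satisfy ‖Φ† − z_δ‖_{L²(Ω)} ≤ δ. Then the discrete energy misfit at the exact coefficient satisfies J^h_δ(Γ†) ≤ C(h^{-2}δ² + (χ^h_{Φ†})² + (β^h)²), where χ^h_{Φ†} := ‖Φ† − Π^hΦ†‖_{H^1(Ω)}, β^h := ‖U_{Γ†} − U^h_{Γ†}‖_{H^1(Ω)}, and C is independent of h and δ; this uses the inverse inequality ‖φ^h‖_{H^1} ≤ Ch^{-1}‖φ^h‖_{L²} on the piecewise linear FE space and the L²- and H^1-stability of the Clément interpolation Π^h. -/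
import Mathlib


open InnerProductSpace

/-- the discrete energy misfit at the exact coefficient satisfies
`J^h_δ(Γ†) ≤ C(h⁻²δ² + (χ^h_{Φ†})² + (β^h)²)` with `C` independent of `h` and
`δ`, using the inverse inequality on the FE space and the `L²`/`H¹` stability
of the Clément interpolation `Π^h`. Here `H` models `H¹(Ω)`, `L2` models
`L²(Ω)`, `ι` the embedding, `Ph` the Clément interpolation, `Vh` the piecewise
linear FE space, `Uh = U^h_{Γ†}` and `Jval = J^h_δ(Γ†) ≤ q̄‖U^h_{Γ†} − Π^h z_δ‖²_{H¹}`. -/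
theorem stmt14
    (H L2 : Type*)
    [NormedAddCommGroup H] [InnerProductSpace ℝ H]
    [NormedAddCommGroup L2] [InnerProductSpace ℝ L2]
    (ι : H →L[ℝ] L2)
    (qbar CP Cinv : ℝ) (hqbar : 0 < qbar) (hCP : 0 < CP) (hCinv : 0 < Cinv) :
    ∃ C : ℝ, 0 < C ∧
      ∀ (h δ : ℝ), 0 < h → 0 ≤ δ →
      ∀ (Vh : Submodule ℝ H) (Ph : L2 →L[ℝ] H),
        -- Clément stability in `L²(Ω)`
        (∀ z : L2, ‖ι (Ph z)‖ ≤ CP * ‖z‖) →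
        -- `Π^h` maps into the FE space
        (∀ z : L2, Ph z ∈ Vh) →
        -- inverse inequality on the piecewise linear FE space
        (∀ v ∈ Vh, ‖v‖ ≤ Cinv * h⁻¹ * ‖ι v‖) →
      ∀ (Φdag Uh : H) (zδ : L2) (Jval χ β : ℝ),
        Uh ∈ Vh →
        -- measurement accuracy `‖Φ† − z_δ‖_{L²} ≤ δ`
        ‖ι Φdag - zδ‖ ≤ δ →
        -- interpolation and FE errors
        χ = ‖Φdag - Ph (ι Φdag)‖ →
        β = ‖Φdag - Uh‖ →
        -- `J^h_δ(Γ†) ≤ q̄ ‖U^h_{Γ†} − Π^h z_δ‖²_{H¹}` (ellipticity upper bound)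
        Jval ≤ qbar * ‖Uh - Ph zδ‖ ^ 2 →
        Jval ≤ C * (h⁻¹ ^ 2 * δ ^ 2 + χ ^ 2 + β ^ 2) := by
  refine ⟨3 * qbar * (1 + (Cinv * CP) ^ 2), by positivity, ?_⟩
  intro h δ hh hδ Vh Ph hPL2 hPV hinv Φdag Uh zδ Jval χ β hUhV hmeas hχ hβ hJ
  -- bound the Clément term
  have hmem : Ph (ι Φdag - zδ) ∈ Vh := hPV _
  have h1 : ‖Ph (ι Φdag - zδ)‖ ≤ Cinv * h⁻¹ * (CP * δ) := by
    calc ‖Ph (ι Φdag - zδ)‖ ≤ Cinv * h⁻¹ * ‖ι (Ph (ι Φdag - zδ))‖ := hinv _ hmem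
      _ ≤ Cinv * h⁻¹ * (CP * ‖ι Φdag - zδ‖) := by
          have := hPL2 (ι Φdag - zδ)
          have hpos : 0 ≤ Cinv * h⁻¹ := by positivity
          exact mul_le_mul_of_nonneg_left this hpos
      _ ≤ Cinv * h⁻¹ * (CP * δ) := by
          have hpos : 0 ≤ Cinv * h⁻¹ := by positivity
          exact mul_le_mul_of_nonneg_left (mul_le_mul_of_nonneg_left hmeas hCP.le) hpos
  -- triangle inequality
  have hdecomp : Uh - Ph zδ = -(Φdag - Uh) + (Φdag - Ph (ι Φdag)) + Ph (ι Φdag - zδ) := by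
    rw [map_sub]; abel
  have h2 : ‖Uh - Ph zδ‖ ≤ β + χ + Cinv * h⁻¹ * (CP * δ) := by
    rw [hdecomp]
    calc ‖-(Φdag - Uh) + (Φdag - Ph (ι Φdag)) + Ph (ι Φdag - zδ)‖
        ≤ ‖-(Φdag - Uh) + (Φdag - Ph (ι Φdag))‖ + ‖Ph (ι Φdag - zδ)‖ := norm_add_le _ _
      _ ≤ ‖-(Φdag - Uh)‖ + ‖Φdag - Ph (ι Φdag)‖ + ‖Ph (ι Φdag - zδ)‖ := by
          gcongr; exact norm_add_le _ _
      _ ≤ β + χ + Cinv * h⁻¹ * (CP * δ) := by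
          rw [norm_neg, ← hχ, ← hβ]; gcongr
  have hn : (0:ℝ) ≤ ‖Uh - Ph zδ‖ := norm_nonneg _
  have hβ0 : 0 ≤ β := hβ ▸ norm_nonneg _
  have hχ0 : 0 ≤ χ := hχ ▸ norm_nonneg _
  have ha0 : (0:ℝ) ≤ Cinv * h⁻¹ * (CP * δ) := by positivity
  have hsq : ‖Uh - Ph zδ‖ ^ 2 ≤ 3 * (β ^ 2 + χ ^ 2 + (Cinv * h⁻¹ * (CP * δ)) ^ 2) := by
    nlinarith [sq_nonneg (β - χ), sq_nonneg (β - Cinv * h⁻¹ * (CP * δ)),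
      sq_nonneg (χ - Cinv * h⁻¹ * (CP * δ)), mul_le_mul h2 h2 hn (by linarith : (0:ℝ) ≤ β + χ + Cinv * h⁻¹ * (CP * δ))]
  calc Jval ≤ qbar * ‖Uh - Ph zδ‖ ^ 2 := hJ
    _ ≤ qbar * (3 * (β ^ 2 + χ ^ 2 + (Cinv * h⁻¹ * (CP * δ)) ^ 2)) :=
        mul_le_mul_of_nonneg_left hsq hqbar.le
    _ ≤ 3 * qbar * (1 + (Cinv * CP) ^ 2) * (h⁻¹ ^ 2 * δ ^ 2 + χ ^ 2 + β ^ 2) := by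
        nlinarith [mul_nonneg hqbar.le (sq_nonneg (h⁻¹ * δ)),
          mul_nonneg hqbar.le (mul_nonneg (sq_nonneg (Cinv * CP)) (sq_nonneg χ)),
          mul_nonneg hqbar.le (mul_nonneg (sq_nonneg (Cinv * CP)) (sq_nonneg β))]
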